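/- Let A be a C*-algebra and let E ⊆ A be a selfadjoint subspace that is approximately 1-generated: {x ∈ E_sa : ‖x‖ ≤ 1} is contained in the closure of {p − q : p, q ∈ E₊, ‖p‖ ≤ 1, ‖q‖ ≤ 1}. Then every positive functional φ on E satisfies ‖φ‖ = sSup { Re(φ x) : x ∈ E₊, ‖x‖ ≤ 1 }; in other words, the norm of any positive functional is attained as the supremum of its (real) values on the positive part of the unit ball. -/
import Mathlib


open scoped ComplexOrder

noncomputable section

/-- Let `E` be a selfadjoint subspace of a C*-algebra `A` which is
approximately 1-generated: every selfadjoint contraction of `E` is a limit of differences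
`p - q` of positive contractions of `E`.  Then the norm of every positive functional `φ` on
`E` is the supremum of its (real) values on the positive part of the unit ball of `E`. -/
theorem stmt_12 {A : Type*} [NonUnitalCStarAlgebra A] [PartialOrder A] [StarOrderedRing A]
    (E : Submodule ℂ A) (hEclosed : IsClosed (E : Set A)) (hEstar : ∀ x ∈ E, star x ∈ E)
    (h1gen : {x : A | x ∈ E ∧ star x = x ∧ ‖x‖ ≤ 1} ⊆
      closure {y : A | ∃ p q : A, p ∈ E ∧ 0 ≤ p ∧ ‖p‖ ≤ 1 ∧ q ∈ E ∧ 0 ≤ q ∧ ‖q‖ ≤ 1 ∧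
        y = p - q})
    (φ : E →L[ℂ] ℂ)
    (hstar : ∀ (x : A) (hx : x ∈ E) (hsx : star x ∈ E),
      φ ⟨star x, hsx⟩ = starRingEnd ℂ (φ ⟨x, hx⟩))
    (hpos : ∀ (x : A) (hx : x ∈ E), 0 ≤ x → 0 ≤ φ ⟨x, hx⟩) :
    ‖φ‖ = sSup {r : ℝ | ∃ (x : A) (hx : x ∈ E), 0 ≤ x ∧ ‖x‖ ≤ 1 ∧ r = (φ ⟨x, hx⟩).re} := by
  set S := {r : ℝ | ∃ (x : A) (hx : x ∈ E), 0 ≤ x ∧ ‖x‖ ≤ 1 ∧ r = (φ ⟨x, hx⟩).re} with hSdef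
  have h0S : (0 : ℝ) ∈ S := by
    refine ⟨0, E.zero_mem, le_refl 0, by simp, ?_⟩
    have : (⟨0, E.zero_mem⟩ : E) = 0 := rfl
    rw [this, map_zero]
    simp
  have hub : ∀ r ∈ S, r ≤ ‖φ‖ := by
    rintro r ⟨x, hx, hx0, hx1, rfl⟩
    have h1 : (φ ⟨x, hx⟩).re ≤ ‖φ ⟨x, hx⟩‖ := Complex.re_le_norm _
    have h2 : ‖φ ⟨x, hx⟩‖ ≤ ‖φ‖ * ‖(⟨x, hx⟩ : E)‖ := φ.le_opNorm _
    have h3 : ‖(⟨x, hx⟩ : E)‖ = ‖x‖ := rfl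
    rw [h3] at h2
    have := mul_le_of_le_one_right (norm_nonneg φ) hx1
    linarith
  have hbdd : BddAbove S := ⟨‖φ‖, hub⟩
  have hM0 : 0 ≤ sSup S := le_csSup hbdd h0S
  have key : ∀ (z : A) (hz : z ∈ E), star z = z → ‖z‖ ≤ 1 →
      (φ ⟨z, hz⟩).re ≤ sSup S := by
    intro z hz hsz hz1
    have hzc := h1gen ⟨hz, hsz, hz1⟩
    obtain ⟨u, hu, hulim⟩ := mem_closure_iff_seq_limit.mp hzc
    have humem : ∀ n, u n ∈ E := by
      intro n
      obtain ⟨p, q, hp, _, _, hq, _, _, heq⟩ := hu n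
      rw [heq]; exact E.sub_mem hp hq
    have hvlim : Filter.Tendsto (fun n => (⟨u n, humem n⟩ : E)) Filter.atTop
        (nhds ⟨z, hz⟩) := by
      rw [tendsto_subtype_rng]; exact hulim
    have hflim : Filter.Tendsto (fun n => (φ ⟨u n, humem n⟩).re) Filter.atTop
        (nhds (φ ⟨z, hz⟩).re) :=
      ((Complex.continuous_re.comp φ.continuous).continuousAt.tendsto).comp hvlim
    refine le_of_tendsto hflim (Filter.Eventually.of_forall fun n => ?_)
    obtain ⟨p, q, hp, hp0, hp1, hq, hq0, hq1, heq⟩ := hu n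
    have hsplit : (⟨u n, humem n⟩ : E) = ⟨p, hp⟩ - ⟨q, hq⟩ := by
      apply Subtype.ext; simp [heq]
    rw [hsplit, map_sub]
    have hq' := hpos q hq hq0
    have hqre : 0 ≤ (φ ⟨q, hq⟩).re := by
      have := (Complex.le_def.mp hq').1; simpa using this
    have hpS : (φ ⟨p, hp⟩).re ≤ sSup S := le_csSup hbdd ⟨p, hp, hp0, hp1, rfl⟩
    simp only [Complex.sub_re]
    linarith
  have claim2 : ∀ y : E, ‖y‖ ≤ 1 → ‖φ y‖ ≤ sSup S := by
    intro y hy1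
    rcases eq_or_ne (φ y) 0 with h0 | h0
    · simp [h0, hM0]
    · set c : ℂ := (‖φ y‖ : ℂ) / φ y with hc
      have hcn : ‖c‖ = 1 := by
        rw [hc, norm_div]
        rw [Complex.norm_real, Real.norm_eq_abs, abs_norm]
        exact div_self (norm_ne_zero_iff.mpr h0)
      have hcφ : c * φ y = (‖φ y‖ : ℂ) := by
        rw [hc, div_mul_cancel₀ _ h0]
      set w : A := c • (y : A) with hw
      have hwE : w ∈ E := E.smul_mem c y.2
      have hswE : star w ∈ E := hEstar w hwE
      have hφw : φ ⟨w, hwE⟩ = (‖φ y‖ : ℂ) := by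
        have : (⟨w, hwE⟩ : E) = c • y := rfl
        rw [this, map_smul, smul_eq_mul, hcφ]
      set z : A := (2⁻¹ : ℂ) • (w + star w) with hz
      have hzE : z ∈ E := E.smul_mem _ (E.add_mem hwE hswE)
      have hzsa : star z = z := by
        rw [hz, star_smul, star_add, star_star]
        simp [add_comm]
      have hzn : ‖z‖ ≤ 1 := by
        have h1 : ‖z‖ ≤ ‖(2⁻¹ : ℂ)‖ * (‖w‖ + ‖star w‖) := by
          rw [hz, norm_smul]
          exact mul_le_mul_of_nonneg_left (norm_add_le _ _) (norm_nonneg _)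
        have h2 : ‖star w‖ = ‖w‖ := norm_star w
        have h3 : ‖w‖ ≤ 1 := by
          rw [hw, norm_smul, hcn, one_mul]
          exact hy1
        have h4 : ‖(2⁻¹ : ℂ)‖ = 2⁻¹ := by norm_num
        rw [h2, h4] at h1
        linarith
      have hφz : (φ ⟨z, hzE⟩).re = ‖φ y‖ := by
        have hsplit : (⟨z, hzE⟩ : E) = (2⁻¹ : ℂ) • (⟨w, hwE⟩ + ⟨star w, hswE⟩) := rfl
        rw [hsplit, map_smul, map_add, hstar w hwE hswE, hφw]
        simp [Complex.add_re]
        ring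
      calc ‖φ y‖ = (φ ⟨z, hzE⟩).re := hφz.symm
        _ ≤ sSup S := key z hzE hzsa hzn
  have hle : ‖φ‖ ≤ sSup S := by
    refine φ.opNorm_le_bound hM0 fun x => ?_
    rcases eq_or_ne x 0 with rfl | hx0
    · simp
    · have hxn : (0 : ℝ) < ‖x‖ := norm_pos_iff.mpr hx0
      set x' : E := ((‖x‖ : ℂ))⁻¹ • x with hx'
      have hx'1 : ‖x'‖ ≤ 1 := by
        rw [hx', norm_smul, norm_inv, Complex.norm_real, Real.norm_eq_abs, abs_of_pos hxn]
        exact le_of_eq (inv_mul_cancel₀ (ne_of_gt hxn))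
      have := claim2 x' hx'1
      rw [hx', map_smul, smul_eq_mul, norm_mul] at this
      have hinv : ‖((‖x‖ : ℂ))⁻¹‖ = ‖x‖⁻¹ := by
        simp [norm_inv, Complex.norm_real, abs_of_pos hxn]
      rw [hinv] at this
      have := (inv_mul_le_iff₀ hxn).mp this
      linarith [this, mul_comm (sSup S) ‖x‖]
  exact le_antisymm hle (Real.sSup_le hub (norm_nonneg φ))
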